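/- arXiv:cs/0604077 — 4 statements merged into one kernel-verified Lean document; each statement's English description precedes it below -/
import Mathlib

section
/- The set function f(A) = (1/2)·log((1/σ_X² + Σ_{i=1}^L (1−e^{−2r_i})/σ_{N_i}²) / (1/σ_X² + Σ_{i∉A} (1−e^{−2r_i})/σ_{N_i}²)) + Σ_{i∈A} r_i, with f(∅)=0, is supermodular: for all subsets S, T of {1,…,L}, f(S) + f(T) ≤ f(S∪T) + f(S∩T). -/
open Finset Real

/-- Supermodularity of the rank function of the Gaussian CEO contra-polymatroid. -/
theorem stmt_0 (L : ℕ) (hL : 0 < L) (σX2 : ℝ) (hσX2 : 0 < σX2)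
    (σN2 : Fin L → ℝ) (hσN2 : ∀ i, 0 < σN2 i)
    (r : Fin L → ℝ) (hr : ∀ i, 0 ≤ r i)
    (f : Finset (Fin L) → ℝ)
    (hf : ∀ A : Finset (Fin L), f A =
      (1 / 2) * Real.log ((1 / σX2 + ∑ i, (1 - Real.exp (-2 * r i)) / σN2 i) /
        (1 / σX2 + ∑ i ∈ Aᶜ, (1 - Real.exp (-2 * r i)) / σN2 i)) + ∑ i ∈ A, r i)
    (hf0 : f ∅ = 0) :
    ∀ S T : Finset (Fin L), f S + f T ≤ f (S ∪ T) + f (S ∩ T) := by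
  intro S T
  set c : Fin L → ℝ := fun i => (1 - Real.exp (-2 * r i)) / σN2 i with hc
  have hcnn : ∀ i, 0 ≤ c i := by
    intro i
    apply div_nonneg _ (hσN2 i).le
    have : Real.exp (-2 * r i) ≤ 1 := by
      rw [Real.exp_le_one_iff]
      nlinarith [hr i]
    linarith
  set g : Finset (Fin L) → ℝ := fun B => 1 / σX2 + ∑ i ∈ B, c i with hg
  have hgpos : ∀ B, 0 < g B := by
    intro B
    have : (0:ℝ) < 1 / σX2 := by positivity
    have h2 : 0 ≤ ∑ i ∈ B, c i := Finset.sum_nonneg fun i _ => hcnn i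
    simp only [hg]; linarith
  set C : ℝ := 1 / σX2 + ∑ i, c i with hC
  have hCpos : 0 < C := by
    rw [hC]
    have h2 : 0 ≤ ∑ i, c i := Finset.sum_nonneg fun i _ => hcnn i
    have : (0:ℝ) < 1 / σX2 := by positivity
    linarith
  -- modularity of g
  have hmod : g (Sᶜ ∪ Tᶜ) + g (Sᶜ ∩ Tᶜ) = g Sᶜ + g Tᶜ := by
    simp only [hg]
    have := Finset.sum_union_inter (s₁ := Sᶜ) (s₂ := Tᶜ) (f := c)
    linarith
  have hmono1 : g (Sᶜ ∩ Tᶜ) ≤ g Sᶜ := by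
    simp only [hg]
    have := Finset.sum_le_sum_of_subset_of_nonneg (Finset.inter_subset_left (s₁ := Sᶜ) (s₂ := Tᶜ))
      (fun i _ _ => hcnn i)
    linarith
  have hmono2 : g (Sᶜ ∩ Tᶜ) ≤ g Tᶜ := by
    simp only [hg]
    have := Finset.sum_le_sum_of_subset_of_nonneg (Finset.inter_subset_right (s₁ := Sᶜ) (s₂ := Tᶜ))
      (fun i _ _ => hcnn i)
    linarith
  have hprod : g (Sᶜ ∩ Tᶜ) * g (Sᶜ ∪ Tᶜ) ≤ g Sᶜ * g Tᶜ := by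
    have hu : g (Sᶜ ∪ Tᶜ) = g Sᶜ + g Tᶜ - g (Sᶜ ∩ Tᶜ) := by linarith
    rw [hu]
    nlinarith [mul_nonneg (sub_nonneg.2 hmono1) (sub_nonneg.2 hmono2)]
  have hlog : Real.log (g (Sᶜ ∩ Tᶜ)) + Real.log (g (Sᶜ ∪ Tᶜ)) ≤
      Real.log (g Sᶜ) + Real.log (g Tᶜ) := by
    have h1 : Real.log (g (Sᶜ ∩ Tᶜ) * g (Sᶜ ∪ Tᶜ)) ≤ Real.log (g Sᶜ * g Tᶜ) :=
      Real.log_le_log (mul_pos (hgpos _) (hgpos _)) hprod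
    rwa [Real.log_mul (hgpos _).ne' (hgpos _).ne', Real.log_mul (hgpos _).ne' (hgpos _).ne'] at h1
  have hr4 : ∑ i ∈ (S ∪ T), r i + ∑ i ∈ (S ∩ T), r i = ∑ i ∈ S, r i + ∑ i ∈ T, r i :=
    Finset.sum_union_inter
  have hfA : ∀ A : Finset (Fin L), f A = (1/2) * (Real.log C - Real.log (g Aᶜ)) + ∑ i ∈ A, r i := by
    intro A
    rw [hf A, Real.log_div hCpos.ne' (hgpos Aᶜ).ne']
  rw [hfA S, hfA T, hfA (S ∪ T), hfA (S ∩ T)]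
  have e1 : (S ∪ T)ᶜ = Sᶜ ∩ Tᶜ := by ext x; simp [Finset.mem_compl]
  have e2 : (S ∩ T)ᶜ = Sᶜ ∪ Tᶜ := by ext x; simp [Finset.mem_compl]
  rw [e1, e2]
  linarith
end

section
/- If r_i > 0 for all i ∈ {1,…,L}, then the set function f(A) = (1/2)·log((1/σ_X² + Σ_{i=1}^L (1−e^{−2r_i})/σ_{N_i}²) / (1/σ_X² + Σ_{i∉A} (1−e^{−2r_i})/σ_{N_i}²)) + Σ_{i∈A} r_i (with f(∅)=0) is strictly supermodular on nonempty sets: for all nonempty S, T ⊆ {1,…,L} with S ⊄ T and T ⊄ S, f(S) + f(T) < f(S∪T) + f(S∩T). -/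
open Finset Real

/-- Strict supermodularity on crossing pairs when all `r i > 0`. -/
theorem stmt_1 (L : ℕ) (hL : 0 < L) (σX2 : ℝ) (hσX2 : 0 < σX2)
    (σN2 : Fin L → ℝ) (hσN2 : ∀ i, 0 < σN2 i)
    (r : Fin L → ℝ) (hr : ∀ i, 0 < r i)
    (f : Finset (Fin L) → ℝ)
    (hf : ∀ A : Finset (Fin L), f A =
      (1 / 2) * Real.log ((1 / σX2 + ∑ i, (1 - Real.exp (-2 * r i)) / σN2 i) /
        (1 / σX2 + ∑ i ∈ Aᶜ, (1 - Real.exp (-2 * r i)) / σN2 i)) + ∑ i ∈ A, r i)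
    (hf0 : f ∅ = 0) :
    ∀ S T : Finset (Fin L), S.Nonempty → T.Nonempty → ¬ S ⊆ T → ¬ T ⊆ S →
      f S + f T < f (S ∪ T) + f (S ∩ T) := by
  intro S T _ _ hST hTS
  set a : Fin L → ℝ := fun i => (1 - Real.exp (-2 * r i)) / σN2 i with ha
  have hapos : ∀ i, 0 < a i := by
    intro i
    apply div_pos _ (hσN2 i)
    have : Real.exp (-2 * r i) < 1 := by
      rw [Real.exp_lt_one_iff]
      nlinarith [hr i]
    linarith
  set c : Finset (Fin L) → ℝ := fun A => 1 / σX2 + ∑ i ∈ Aᶜ, a i with hc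
  have hcpos : ∀ A, 0 < c A := by
    intro A
    have : (0:ℝ) ≤ ∑ i ∈ Aᶜ, a i := Finset.sum_nonneg fun i _ => (hapos i).le
    have := one_div_pos.mpr hσX2
    simp only [hc]
    linarith
  have hNpos : 0 < 1 / σX2 + ∑ i, a i := by
    have : (0:ℝ) ≤ ∑ i, a i := Finset.sum_nonneg fun i _ => (hapos i).le
    have := one_div_pos.mpr hσX2
    linarith
  -- sum identity
  have hsum : c (S ∪ T) + c (S ∩ T) = c S + c T := by
    simp only [hc, Finset.compl_union, Finset.compl_inter]
    have := Finset.sum_union_inter (s₁ := Sᶜ) (s₂ := Tᶜ) (f := a)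
    linarith
  -- strict inequalities
  have hlt : ∀ U V : Finset (Fin L), ¬ V ⊆ U → c (U ∪ V) < c U := by
    intro U V hVU
    obtain ⟨x, hxV, hxU⟩ := Finset.not_subset.mp hVU
    have hsub : (U ∪ V)ᶜ ⊆ Uᶜ := Finset.compl_subset_compl.mpr Finset.subset_union_left
    have hx1 : x ∈ Uᶜ := Finset.mem_compl.mpr hxU
    have hx2 : x ∉ (U ∪ V)ᶜ := by
      simp [Finset.mem_compl, hxV]
    have := Finset.sum_lt_sum_of_subset hsub hx1 hx2 (hapos x) (fun i _ _ => (hapos i).le)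
    simp only [hc]
    linarith
  have h1 : c (S ∪ T) < c S := hlt S T hTS
  have h2 : c (S ∪ T) < c T := by
    have := hlt T S hST
    rwa [Finset.union_comm] at this
  have hprod : c (S ∪ T) * c (S ∩ T) < c S * c T := by
    have key : c S * c T - c (S ∪ T) * c (S ∩ T)
        = (c S - c (S ∪ T)) * (c T - c (S ∪ T)) := by
      linear_combination (-(c (S ∪ T))) * hsum
    have := mul_pos (sub_pos.2 h1) (sub_pos.2 h2)
    linarith
  have hlog : Real.log (c (S ∪ T)) + Real.log (c (S ∩ T)) <
      Real.log (c S) + Real.log (c T) := by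
    have := Real.log_lt_log (mul_pos (hcpos (S ∪ T)) (hcpos (S ∩ T))) hprod
    rwa [Real.log_mul (hcpos _).ne' (hcpos _).ne',
      Real.log_mul (hcpos _).ne' (hcpos _).ne'] at this
  have hrsum : ∑ i ∈ S, r i + ∑ i ∈ T, r i
      = ∑ i ∈ S ∪ T, r i + ∑ i ∈ S ∩ T, r i :=
    (Finset.sum_union_inter (s₁ := S) (s₂ := T) (f := r)).symm
  have hlogdiv : ∀ A : Finset (Fin L),
      Real.log ((1 / σX2 + ∑ i, a i) / c A)
        = Real.log (1 / σX2 + ∑ i, a i) - Real.log (c A) := fun A =>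
    Real.log_div hNpos.ne' (hcpos A).ne'
  rw [hf S, hf T, hf (S ∪ T), hf (S ∩ T)]
  show (1/2) * Real.log ((1 / σX2 + ∑ i, a i) / c S) + _
      + ((1/2) * Real.log ((1 / σX2 + ∑ i, a i) / c T) + _)
      < (1/2) * Real.log ((1 / σX2 + ∑ i, a i) / c (S ∪ T)) + _
      + ((1/2) * Real.log ((1 / σX2 + ∑ i, a i) / c (S ∩ T)) + _)
  rw [hlogdiv S, hlogdiv T, hlogdiv (S ∪ T), hlogdiv (S ∩ T)]
  linarith
end

section
/- For each nonempty A ⊆ {1,…,L} and each D > 0, the function f_D(A, r) = (1/2)·log(1/D) − (1/2)·log(1/σ_X² + Σ_{i∉A} (1−e^{−2r_i})/σ_{N_i}²) + Σ_{i∈A} r_i is convex in r = (r_1,…,r_L) on [0,∞)^L. -/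
open Finset Real

/-- Convexity in `r` of the constraint function `f_D(A, ·)`. -/
theorem stmt_3 (L : ℕ) (σX2 : ℝ) (hσX2 : 0 < σX2)
    (σN2 : Fin L → ℝ) (hσN2 : ∀ i, 0 < σN2 i)
    (D : ℝ) (hD : 0 < D) (A : Finset (Fin L)) (hA : A.Nonempty)
    (fD : (Fin L → ℝ) → ℝ)
    (hfD : ∀ x, fD x = (1 / 2) * Real.log (1 / D)
      - (1 / 2) * Real.log (1 / σX2 + ∑ i ∈ Aᶜ, (1 - Real.exp (-2 * x i)) / σN2 i)
      + ∑ i ∈ A, x i) :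
    ConvexOn ℝ {x : Fin L → ℝ | ∀ i, 0 ≤ x i} fD := by
  set S : Set (Fin L → ℝ) := {x : Fin L → ℝ | ∀ i, 0 ≤ x i} with hS
  set g : (Fin L → ℝ) → ℝ := fun x =>
    1 / σX2 + ∑ i ∈ Aᶜ, (1 - Real.exp (-2 * x i)) / σN2 i with hg
  have hSconv : Convex ℝ S := by
    intro x hx y hy a b ha hb hab
    intro i
    have := hx i; have := hy i
    have : 0 ≤ a * x i + b * y i := by positivity
    simpa using this
  -- g is positive on S
  have hgpos : ∀ x ∈ S, 0 < g x := by
    intro x hx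
    have h1 : 0 < 1 / σX2 := by positivity
    have h2 : 0 ≤ ∑ i ∈ Aᶜ, (1 - Real.exp (-2 * x i)) / σN2 i := by
      apply Finset.sum_nonneg
      intro i _
      have hxi := hx i
      have hle : Real.exp (-2 * x i) ≤ 1 := by
        rw [← Real.exp_zero]
        apply Real.exp_le_exp.2
        nlinarith
      exact div_nonneg (by linarith) (hσN2 i).le
    simp only [hg]; linarith
  -- g is concave on S
  have hgconc : ConcaveOn ℝ S g := by
    refine ⟨hSconv, ?_⟩
    intro x hx y hy a b ha hb hab
    simp only [hg, smul_eq_mul, Pi.add_apply, Pi.smul_apply, smul_eq_mul]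
    have key : ∀ i ∈ Aᶜ,
        a * ((1 - Real.exp (-2 * x i)) / σN2 i) + b * ((1 - Real.exp (-2 * y i)) / σN2 i)
        ≤ (1 - Real.exp (-2 * (a * x i + b * y i))) / σN2 i := by
      intro i _
      have hexp : Real.exp (a * (-2 * x i) + b * (-2 * y i))
          ≤ a * Real.exp (-2 * x i) + b * Real.exp (-2 * y i) :=
        convexOn_exp.2 (Set.mem_univ _) (Set.mem_univ _) ha hb hab
      have h1 : -2 * (a * x i + b * y i) = a * (-2 * x i) + b * (-2 * y i) := by ring
      rw [h1, ← mul_div_assoc, ← mul_div_assoc, ← add_div,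
        div_le_div_iff_of_pos_right (hσN2 i)]
      nlinarith
    have hsum := Finset.sum_le_sum key
    rw [Finset.sum_add_distrib, ← Finset.mul_sum, ← Finset.mul_sum] at hsum
    have hc : a * (1 / σX2) + b * (1 / σX2) = 1 / σX2 := by
      rw [← add_mul, hab, one_mul]
    rw [mul_add, mul_add]
    linarith
  -- log ∘ g is concave on S
  have hlog : ConcaveOn ℝ S (fun x => Real.log (g x)) := by
    refine ⟨hSconv, ?_⟩
    intro x hx y hy a b ha hb hab
    have hgx := hgpos x hx
    have hgy := hgpos y hy
    have hmix : 0 < a * g x + b * g y := by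
      rcases ha.lt_or_eq with h | h
      · have h1 : 0 < a * g x := mul_pos h hgx
        have h2 : 0 ≤ b * g y := mul_nonneg hb hgy.le
        linarith
      · have hb1 : b = 1 := by linarith
        rw [← h, hb1]; simpa using hgy
    have h1 : a • Real.log (g x) + b • Real.log (g y) ≤ Real.log (a * g x + b * g y) := by
      have := strictConcaveOn_log_Ioi.concaveOn.2 (Set.mem_Ioi.2 hgx) (Set.mem_Ioi.2 hgy)
        ha hb hab
      simpa using this
    have h2 : Real.log (a * g x + b * g y) ≤ Real.log (g (a • x + b • y)) := by
      apply Real.log_le_log hmix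
      have := hgconc.2 hx hy ha hb hab
      simpa using this
    calc a • Real.log (g x) + b • Real.log (g y) ≤ Real.log (a * g x + b * g y) := h1
      _ ≤ _ := h2
  -- linear part
  have hlin : ConvexOn ℝ S (fun x => ∑ i ∈ A, x i) := by
    refine ⟨hSconv, ?_⟩
    intro x _ y _ a b _ _ _
    apply le_of_eq
    simp [Finset.mul_sum, Finset.sum_add_distrib]
  have hneg : ConvexOn ℝ S (fun x => (1 / 2 : ℝ) * Real.log (1 / D)
      - (1 / 2) * Real.log (g x)) := by
    have h1 : ConvexOn ℝ S (fun x => -Real.log (g x)) := hlog.neg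
    have h2 : ConvexOn ℝ S (fun x => (1 / 2 : ℝ) * -Real.log (g x)) := by
      have := h1.smul (by norm_num : (0:ℝ) ≤ 1 / 2)
      simpa [smul_eq_mul] using this
    have h3 := h2.add_const ((1 / 2 : ℝ) * Real.log (1 / D))
    have heq : (fun x => (1 / 2 : ℝ) * Real.log (1 / D) - (1 / 2) * Real.log (g x))
        = ((fun x => (1 / 2 : ℝ) * -Real.log (g x)) + fun _ => (1 / 2 : ℝ) * Real.log (1 / D)) := by
      funext x; simp [Pi.add_apply]; ring
    rw [heq]; exact h3
  have hfinal := hneg.add hlin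
  have heq2 : fD = ((fun x => (1 / 2 : ℝ) * Real.log (1 / D) - (1 / 2) * Real.log (g x))
      + fun x => ∑ i ∈ A, x i) := by
    funext x; rw [hfD x]; rfl
  rw [heq2]; exact hfinal
end

section
/- Uniqueness in Lemma 3.5: fix L, positive σ_X², σ_{N_i}² (i=1,…,L), a target D* > 0, and R ∈ [0,∞)^L. Suppose r', r'' ∈ [0,∞)^L both satisfy (a) 1/σ_X² + Σ_i (1−e^{−2r_i})/σ_{N_i}² = 1/D*, and (b) for all nonempty A ⊆ {1,…,L}: Σ_{i∈A} R_i ≥ (1/2)log(1/D*) − (1/2)log(1/σ_X² + Σ_{i∉A}(1−e^{−2r_i})/σ_{N_i}²) + Σ_{i∈A} r_i, and furthermore the set { r ∈ [0,∞)^L satisfying (b) and 1/σ_X² + Σ_i (1−e^{−2r_i})/σ_{N_i}² ≥ 1/D* } contains both r' and r'' and any such r must satisfy equality in (a). If additionally all coordinates of r' and r'' are finite, then r' = r''. -/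
open Finset Real

set_option maxHeartbeats 1000000

lemma exp_mid_le (x y : ℝ) : Real.exp ((x + y) / 2) ≤ (Real.exp x + Real.exp y) / 2 := by
  have := convexOn_exp.2 (Set.mem_univ x) (Set.mem_univ y)
    (by norm_num : (0:ℝ) ≤ 1/2) (by norm_num : (0:ℝ) ≤ 1/2) (by norm_num)
  simp only [smul_eq_mul] at this
  calc Real.exp ((x + y) / 2) = Real.exp (1/2 * x + 1/2 * y) := by ring_nf
    _ ≤ 1/2 * Real.exp x + 1/2 * Real.exp y := this
    _ = (Real.exp x + Real.exp y) / 2 := by ring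

lemma exp_mid_lt {x y : ℝ} (h : x ≠ y) :
    Real.exp ((x + y) / 2) < (Real.exp x + Real.exp y) / 2 := by
  have := strictConvexOn_exp.2 (Set.mem_univ x) (Set.mem_univ y) h
    (by norm_num : (0:ℝ) < 1/2) (by norm_num : (0:ℝ) < 1/2) (by norm_num)
  simp only [smul_eq_mul] at this
  calc Real.exp ((x + y) / 2) = Real.exp (1/2 * x + 1/2 * y) := by ring_nf
    _ < 1/2 * Real.exp x + 1/2 * Real.exp y := this
    _ = (Real.exp x + Real.exp y) / 2 := by ring

lemma log_mid_ge {a b : ℝ} (ha : 0 < a) (hb : 0 < b) :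
    (Real.log a + Real.log b) / 2 ≤ Real.log ((a + b) / 2) := by
  have := strictConcaveOn_log_Ioi.concaveOn.2 (Set.mem_Ioi.mpr ha) (Set.mem_Ioi.mpr hb)
    (by norm_num : (0:ℝ) ≤ 1/2) (by norm_num : (0:ℝ) ≤ 1/2) (by norm_num)
  simp only [smul_eq_mul] at this
  calc (Real.log a + Real.log b) / 2 = 1/2 * Real.log a + 1/2 * Real.log b := by ring
    _ ≤ Real.log (1/2 * a + 1/2 * b) := this
    _ = Real.log ((a + b) / 2) := by ring_nf

/-- Uniqueness part of Lemma 3.5: two feasible points whose distortion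
constraint is tight (as is forced for every feasible point) must coincide. -/
theorem stmt_8 (L : ℕ) (σX2 : ℝ) (hσX2 : 0 < σX2)
    (σN2 : Fin L → ℝ) (hσN2 : ∀ i, 0 < σN2 i)
    (Dstar : ℝ) (hD : 0 < Dstar)
    (R : Fin L → ℝ) (hR : ∀ i, 0 ≤ R i)
    (feas : (Fin L → ℝ) → Prop)
    (hfeas : ∀ r : Fin L → ℝ, feas r ↔ ((∀ i, 0 ≤ r i) ∧
      (∀ A : Finset (Fin L), A.Nonempty →
        (1 / 2) * Real.log (1 / Dstar)
          - (1 / 2) * Real.log (1 / σX2 + ∑ i ∈ Aᶜ, (1 - Real.exp (-2 * r i)) / σN2 i)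
          + ∑ i ∈ A, r i ≤ ∑ i ∈ A, R i) ∧
      1 / Dstar ≤ 1 / σX2 + ∑ i, (1 - Real.exp (-2 * r i)) / σN2 i))
    (heq : ∀ r : Fin L → ℝ, feas r →
      1 / σX2 + ∑ i, (1 - Real.exp (-2 * r i)) / σN2 i = 1 / Dstar)
    (r' r'' : Fin L → ℝ) (hr' : feas r') (hr'' : feas r'')
    (ha' : 1 / σX2 + ∑ i, (1 - Real.exp (-2 * r' i)) / σN2 i = 1 / Dstar)
    (ha'' : 1 / σX2 + ∑ i, (1 - Real.exp (-2 * r'' i)) / σN2 i = 1 / Dstar) :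
    r' = r'' := by
  by_contra hne
  obtain ⟨h1', h2', h3'⟩ := (hfeas r').mp hr'
  obtain ⟨h1'', h2'', h3''⟩ := (hfeas r'').mp hr''
  -- the midpoint
  set m : Fin L → ℝ := fun i => (r' i + r'' i) / 2 with hm
  -- pointwise inequality
  have hpt : ∀ i, ((1 - Real.exp (-2 * r' i)) / σN2 i + (1 - Real.exp (-2 * r'' i)) / σN2 i) / 2
      ≤ (1 - Real.exp (-2 * m i)) / σN2 i := by
    intro i
    have h := exp_mid_le (-2 * r' i) (-2 * r'' i)
    have hσ := hσN2 i
    have hE : Real.exp (-2 * m i) ≤ (Real.exp (-2 * r' i) + Real.exp (-2 * r'' i)) / 2 := by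
      have : -2 * m i = (-2 * r' i + -2 * r'' i) / 2 := by simp [hm]; ring
      rw [this]; exact h
    rw [← add_div, div_div, div_le_div_iff₀ (by positivity) hσ]
    nlinarith [hσ]
  have hptS : ∀ s : Finset (Fin L),
      ((∑ i ∈ s, (1 - Real.exp (-2 * r' i)) / σN2 i)
        + ∑ i ∈ s, (1 - Real.exp (-2 * r'' i)) / σN2 i) / 2
      ≤ ∑ i ∈ s, (1 - Real.exp (-2 * m i)) / σN2 i := by
    intro s
    rw [← Finset.sum_add_distrib, Finset.sum_div]
    exact Finset.sum_le_sum fun i _ => hpt i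
  -- strict at some coordinate
  obtain ⟨j, hj⟩ : ∃ j, r' j ≠ r'' j := by
    by_contra h; push_neg at h; exact hne (funext h)
  have hptj : ((1 - Real.exp (-2 * r' j)) / σN2 j + (1 - Real.exp (-2 * r'' j)) / σN2 j) / 2
      < (1 - Real.exp (-2 * m j)) / σN2 j := by
    have hσ := hσN2 j
    have h := exp_mid_lt (show (-2 * r' j) ≠ (-2 * r'' j) by
      intro h; apply hj; linarith [mul_left_cancel₀ (show (-2:ℝ) ≠ 0 by norm_num) h])
    have hE : Real.exp (-2 * m j) < (Real.exp (-2 * r' j) + Real.exp (-2 * r'' j)) / 2 := by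
      have : -2 * m j = (-2 * r' j + -2 * r'' j) / 2 := by simp [hm]; ring
      rw [this]; exact h
    rw [← add_div, div_div, div_lt_div_iff₀ (by positivity) hσ]
    nlinarith [hσ]
  have hstrict : 1 / Dstar < 1 / σX2 + ∑ i, (1 - Real.exp (-2 * m i)) / σN2 i := by
    have hsum : ((∑ i, (1 - Real.exp (-2 * r' i)) / σN2 i)
        + ∑ i, (1 - Real.exp (-2 * r'' i)) / σN2 i) / 2
        < ∑ i, (1 - Real.exp (-2 * m i)) / σN2 i := by
      rw [← Finset.sum_add_distrib, Finset.sum_div]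
      refine Finset.sum_lt_sum (fun i _ => ?_) ⟨j, Finset.mem_univ j, ?_⟩
      · have := hpt i; rw [← add_div] at this ⊢; exact this
      · have := hptj; rw [← add_div] at this ⊢; exact this
    linarith
  -- positivity of partial sums
  have hpos : ∀ (r : Fin L → ℝ), (∀ i, 0 ≤ r i) → ∀ s : Finset (Fin L),
      0 < 1 / σX2 + ∑ i ∈ s, (1 - Real.exp (-2 * r i)) / σN2 i := by
    intro r hr s
    have : 0 ≤ ∑ i ∈ s, (1 - Real.exp (-2 * r i)) / σN2 i := by
      refine Finset.sum_nonneg fun i _ => div_nonneg ?_ (hσN2 i).le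
      have : Real.exp (-2 * r i) ≤ 1 := by
        rw [Real.exp_le_one_iff]
        nlinarith [hr i]
      linarith
    have h0 : 0 < 1/σX2 := by positivity
    linarith
  -- midpoint is feasible
  have hmfeas : feas m := by
    rw [hfeas]
    refine ⟨fun i => by have := h1' i; have := h1'' i; simp [hm]; linarith, fun A hA => ?_, le_of_lt hstrict⟩
    have hc' := h2' A hA
    have hc'' := h2'' A hA
    have hp' := hpos r' h1' Aᶜ
    have hp'' := hpos r'' h1'' Aᶜ
    have hS := hptS Aᶜ
    set a1 := 1 / σX2 + ∑ i ∈ Aᶜ, (1 - Real.exp (-2 * r' i)) / σN2 i with ha1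
    set a2 := 1 / σX2 + ∑ i ∈ Aᶜ, (1 - Real.exp (-2 * r'' i)) / σN2 i with ha2
    set am := 1 / σX2 + ∑ i ∈ Aᶜ, (1 - Real.exp (-2 * m i)) / σN2 i with ham
    have h4 : (a1 + a2) / 2 ≤ am := by rw [ha1, ha2, ham]; linarith
    clear_value a1 a2 am
    have hmono : Real.log ((a1 + a2) / 2) ≤ Real.log am :=
      Real.log_le_log (by linarith) h4
    have hlog := le_trans (log_mid_ge hp' hp'') hmono
    have hsumA : ∑ i ∈ A, m i = ((∑ i ∈ A, r' i) + ∑ i ∈ A, r'' i) / 2 := by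
      rw [← Finset.sum_add_distrib, Finset.sum_div]
    rw [hsumA]
    linarith
  have := heq m hmfeas
  linarith
end
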